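/- Let H = ℝ² with the Euclidean inner product, let e₁ = (1,0), e₂ = (0,1), and let D = {e₁, −e₁, e₂, −e₂}. Fix ε > 0 and set v₁ := (1+ε, 1) and v₂ := (1, 1+ε). Then: (i) e₁ is the unique element of D maximizing g ↦ ⟨v₁, g⟩ over D and the Pure Greedy Algorithm residual after one iteration is v₁ − ⟨v₁, e₁⟩e₁ = e₂; (ii) e₂ is the unique element of D maximizing g ↦ ⟨v₂, g⟩ over D and the residual after one iteration is v₂ − ⟨v₂, e₂⟩e₂ = e₁; (iii) the residuals satisfy ‖e₂ − e₁‖ = √2 while ‖v₁ − v₂‖ = ε√2. In particular, for small ε the PGA residual map changes the distance between inputs by the factor 1/ε. -/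
import Mathlib

open scoped RealInnerProductSpace

/-- Instability of the Pure Greedy Algorithm in the wide sense: in `ℝ²` with the
dictionary `D = {±e₁, ±e₂}`, for the inputs `v₁ = (1+ε)e₁ + e₂` and
`v₂ = e₁ + (1+ε)e₂` the PGA picks `e₁` (resp. `e₂`) as the unique maximizer and
produces residuals `e₂` (resp. `e₁`), so `‖e₂ - e₁‖ = √2` while `‖v₁ - v₂‖ = ε√2`. -/
theorem stmt_7 (ε : ℝ) (hε : 0 < ε)
    (e₁ e₂ v₁ v₂ : EuclideanSpace ℝ (Fin 2))
    (he₁ : e₁ = EuclideanSpace.single 0 1)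
    (he₂ : e₂ = EuclideanSpace.single 1 1)
    (D : Set (EuclideanSpace ℝ (Fin 2))) (hD : D = {e₁, -e₁, e₂, -e₂})
    (hv₁ : v₁ = (1 + ε) • e₁ + e₂) (hv₂ : v₂ = e₁ + (1 + ε) • e₂) :
    (e₁ ∈ D ∧ (∀ g ∈ D, g ≠ e₁ → ⟪v₁, g⟫ < ⟪v₁, e₁⟫) ∧ v₁ - ⟪v₁, e₁⟫ • e₁ = e₂) ∧
    (e₂ ∈ D ∧ (∀ g ∈ D, g ≠ e₂ → ⟪v₂, g⟫ < ⟪v₂, e₂⟫) ∧ v₂ - ⟪v₂, e₂⟫ • e₂ = e₁) ∧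
    ‖e₂ - e₁‖ = Real.sqrt 2 ∧ ‖v₁ - v₂‖ = ε * Real.sqrt 2 := by
  subst he₁ he₂ hv₁ hv₂ hD
  have h11 : ⟪(EuclideanSpace.single 0 1 : EuclideanSpace ℝ (Fin 2)), EuclideanSpace.single 0 1⟫ = 1 := by
    simp [EuclideanSpace.inner_single_left, EuclideanSpace.single_apply]
  have h12 : ⟪(EuclideanSpace.single 0 1 : EuclideanSpace ℝ (Fin 2)), EuclideanSpace.single 1 1⟫ = 0 := by
    simp [EuclideanSpace.inner_single_left, EuclideanSpace.single_apply]
  have h21 : ⟪(EuclideanSpace.single 1 1 : EuclideanSpace ℝ (Fin 2)), EuclideanSpace.single 0 1⟫ = 0 := by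
    simp [EuclideanSpace.inner_single_left, EuclideanSpace.single_apply]
  have h22 : ⟪(EuclideanSpace.single 1 1 : EuclideanSpace ℝ (Fin 2)), EuclideanSpace.single 1 1⟫ = 1 := by
    simp [EuclideanSpace.inner_single_left, EuclideanSpace.single_apply]
  refine ⟨⟨by simp, ?_, ?_⟩, ⟨by simp [Set.mem_insert_iff], ?_, ?_⟩, ?_, ?_⟩
  · intro g hg hne
    rcases hg with h | h | h | h <;> subst h
    · exact absurd rfl hne
    all_goals
      simp only [inner_add_left, inner_neg_right, real_inner_smul_left, h11, h12, h21, h22]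
      nlinarith
  · rw [inner_add_left, real_inner_smul_left, h11, h21]
    module
  · intro g hg hne
    rcases hg with h | h | h | h <;> subst h
    · simp only [inner_add_left, inner_neg_right, real_inner_smul_left, h11, h12, h21, h22]
      nlinarith
    · simp only [inner_add_left, inner_neg_right, real_inner_smul_left, h11, h12, h21, h22]
      nlinarith
    · exact absurd rfl hne
    · simp only [inner_add_left, inner_neg_right, real_inner_smul_left, h11, h12, h21, h22]
      nlinarith
  · rw [inner_add_left, real_inner_smul_left, h12, h22]
    module
  · rw [EuclideanSpace.norm_eq]
    simp [Fin.sum_univ_two, EuclideanSpace.single_apply]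
    norm_num
  · have : ((1 + ε) • (EuclideanSpace.single 0 1 : EuclideanSpace ℝ (Fin 2)) + EuclideanSpace.single 1 1) - (EuclideanSpace.single 0 1 + (1 + ε) • EuclideanSpace.single 1 1) = ε • EuclideanSpace.single 0 1 - ε • EuclideanSpace.single 1 1 := by module
    rw [this, EuclideanSpace.norm_eq]
    simp [Fin.sum_univ_two, EuclideanSpace.single_apply]
    rw [show ε^2 + ε^2 = ε^2*2 by ring, Real.sqrt_mul (sq_nonneg ε), Real.sqrt_sq hε.le]
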